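/- R is translation invariant if and only if the consolidated uncertainty set U is translation invariant: U_{t+1}(X + Z) = U_{t+1}(X) + Z for all F_t-measurable bounded Z. -/

import Mathlib

open Set

/-- A random variable is (essentially) bounded, i.e. lies in `L^∞`. -/
def IsBdd {Ω : Type*} (Y : Ω → ℝ) : Prop := ∃ C : ℝ, ∀ ω, |Y ω| ≤ C

/-- The robust risk measure `R X := esssup { ρ Z : Z ∈ u X }`. -/
noncomputable def robustR {Ω : Type*} (ρ : (Ω → ℝ) → (Ω → ℝ))
    (u : (ℕ → Ω → ℝ) → Set (Ω → ℝ)) (X : ℕ → Ω → ℝ) : Ω → ℝ :=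
  sSup (ρ '' u X)

/-- The consolidated uncertainty set `U X := { Y : ρ Y ≤ R X }`. -/
def consolidated {Ω : Type*} (ρ : (Ω → ℝ) → (Ω → ℝ))
    (u : (ℕ → Ω → ℝ) → Set (Ω → ℝ)) (X : ℕ → Ω → ℝ) : Set (Ω → ℝ) :=
  {Y : Ω → ℝ | ρ Y ≤ robustR ρ u X}

/-- `R` is translation invariant if and only if the consolidated
uncertainty set `U` is translation invariant, `U (X + Z) = U X + Z`, for all
`F_t`-measurable bounded `Z` (added in the time-`t` slot of the process). -/
theorem transInv_R_iff_transInv_U {Ω : Type*} (m : MeasurableSpace Ω) (t : ℕ)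
    (ρ : (Ω → ℝ) → (Ω → ℝ))
    (hmono : ∀ X Y : Ω → ℝ, X ≤ Y → ρ X ≤ ρ Y)
    (htrans : ∀ Y Z : Ω → ℝ, @Measurable Ω ℝ m _ Z → IsBdd Z → ρ (Y + Z) = ρ Y + Z)
    (u : (ℕ → Ω → ℝ) → Set (Ω → ℝ))
    (hne : ∀ X, (u X).Nonempty)
    (hb : ∀ X, u X ⊆ {Y | IsBdd Y})
    (hub : ∀ X, ∃ c : ℝ, ∀ Y ∈ u X, Y ≤ fun _ => c)
    (hRmeas : ∀ X, @Measurable Ω ℝ m _ (robustR ρ u X)) :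
    (∀ (X : ℕ → Ω → ℝ) (Z : Ω → ℝ), @Measurable Ω ℝ m _ Z → IsBdd Z →
        robustR ρ u (fun n => if n = t then X n + Z else X n) = robustR ρ u X + Z) ↔
      (∀ (X : ℕ → Ω → ℝ) (Z : Ω → ℝ), @Measurable Ω ℝ m _ Z → IsBdd Z →
        consolidated ρ u (fun n => if n = t then X n + Z else X n) =
          (· + Z) '' consolidated ρ u X) := by
  -- every element of `u X` has risk at most `robustR`
  have hle : ∀ X, ∀ W ∈ u X, ρ W ≤ robustR ρ u X := by
    intro X W hW ω
    obtain ⟨c, hc⟩ := hub X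
    have hbdd : BddAbove (Set.range fun f : (ρ '' u X) => (f : Ω → ℝ) ω) := by
      refine ⟨ρ (fun _ => c) ω, ?_⟩
      rintro x ⟨⟨f, ⟨W', hW', rfl⟩⟩, rfl⟩
      exact hmono W' (fun _ => c) (hc W' hW') ω
    exact le_ciSup hbdd ⟨ρ W, ⟨W, hW, rfl⟩⟩
  -- `robustR` is the least upper bound
  have hsup_le : ∀ X (g : Ω → ℝ), (∀ W ∈ u X, ρ W ≤ g) → robustR ρ u X ≤ g := by
    intro X g hg ω
    have hne' : Nonempty (ρ '' u X) :=
      ⟨⟨ρ (hne X).choose, ⟨_, (hne X).choose_spec, rfl⟩⟩⟩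
    refine ciSup_le ?_
    rintro ⟨f, ⟨W, hW, rfl⟩⟩
    exact hg W hW ω
  constructor
  · -- R translation invariant → U translation invariant
    intro h X Z hZm hZb
    ext Y
    constructor
    · intro hY
      have hY' : ρ Y ≤ robustR ρ u X + Z := by
        have h0 : ρ Y ≤ robustR ρ u (fun n => if n = t then X n + Z else X n) := hY
        rw [h X Z hZm hZb] at h0
        exact h0
      refine ⟨fun ω => Y ω - Z ω, ?_, ?_⟩
      · have heq : ((fun ω => Y ω - Z ω) + Z) = Y := by
          funext ω; simp
        have h1 := htrans (fun ω => Y ω - Z ω) Z hZm hZb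
        rw [heq] at h1
        intro ω
        have h2 := congrFun h1 ω
        have h3 := hY' ω
        simp [Pi.add_apply] at h2 h3 ⊢
        linarith
      · funext ω; simp
    · rintro ⟨W, hW, rfl⟩
      show ρ (W + Z) ≤ robustR ρ u _
      rw [htrans W Z hZm hZb, h X Z hZm hZb]
      intro ω
      exact add_le_add (hW ω) (le_refl _)
  · -- U translation invariant → R translation invariant
    intro h X Z hZm hZb
    set X' : ℕ → Ω → ℝ := fun n => if n = t then X n + Z else X n with hX'
    apply le_antisymm
    · apply hsup_le
      intro W hW
      have hWmem : W ∈ consolidated ρ u X' := hle X' W hW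
      rw [h X Z hZm hZb] at hWmem
      obtain ⟨V, hV, rfl⟩ := hWmem
      rw [htrans V Z hZm hZb]
      intro ω
      exact add_le_add (hV ω) (le_refl _)
    · have key : robustR ρ u X ≤ fun ω => robustR ρ u X' ω - Z ω := by
        apply hsup_le
        intro W hW
        have hmem : W + Z ∈ consolidated ρ u X' := by
          rw [h X Z hZm hZb]
          exact ⟨W, hle X W hW, rfl⟩
        intro ω
        have h2 := congrFun (htrans W Z hZm hZb) ω
        have h3 := hmem ω
        simp only [Pi.add_apply] at h2
        show ρ W ω ≤ robustR ρ u X' ω - Z ω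
        linarith
      intro ω
      have h4 := key ω
      dsimp only at h4
      simp only [Pi.add_apply]
      linarith
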